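/- Let k ≥ 1 and let S : ZMod (2k) → ZMod (2k) → ℝ satisfy purity and strong subadditivity. Then for every permutation σ of ZMod k, Σ_{i ∈ ZMod k} S (R_{σ(i)}) (L_{σ(i+1)}) ≥ Σ_{i ∈ ZMod k} S (R_i) (L_{i+1}), where L_i := 2i and R_i := 2i + 1. That is, among all putative completely connected phases (X_{σ(0)} X_{σ(1)} ⋯ X_{σ(k−1)}) joining the intervals X_i in the cyclic order prescribed by σ, the total entropy is minimized when σ respects the spatial ordering; hence the minimal configuration always connects intervals according to their spatial ordering. -/
import Mathlib
set_option linter.unusedSectionVars false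
set_option linter.unusedVariables false
set_option maxHeartbeats 1000000

/-- `a, b, c, d ∈ ZMod m` are in weak cyclic order: they admit integer representatives
`a' ≤ b' ≤ c' ≤ d' ≤ a' + m`. -/
def CyclicOrdered {m : ℕ} (a b c d : ZMod m) : Prop :=
  ∃ a' b' c' d' : ℕ, a' ≤ b' ∧ b' ≤ c' ∧ c' ≤ d' ∧ d' ≤ a' + m ∧
    (a' : ZMod m) = a ∧ (b' : ZMod m) = b ∧ (c' : ZMod m) = c ∧ (d' : ZMod m) = d

/-- The left endpoint `L_i := 2i` of the interval `X_i`. -/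
def Lpt {k : ℕ} (i : ZMod k) : ZMod (2 * k) := ((2 * i.val : ℕ) : ZMod (2 * k))

/-- The right endpoint `R_i := 2i + 1` of the interval `X_i`. -/
def Rpt {k : ℕ} (i : ZMod k) : ZMod (2 * k) := ((2 * i.val + 1 : ℕ) : ZMod (2 * k))

namespace ConnPhase

/-- time reversal of the segment `[0, s]`. -/
def revFun (n s : ℕ) : ZMod n → ZMod n :=
  fun u => if u.val ≤ s then ((s - u.val : ℕ) : ZMod n) else u

/-- weight of a chord: `ℓ (n - ℓ)` where `ℓ` is the ccw arc length. -/
def wgt (n : ℕ) : ZMod n → ZMod n → ℕ := fun x y => (y - x).val * (n - (y - x).val)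

variable {n : ℕ} [NeZero n] {M : Type*} [AddCommMonoid M]

lemma sum_zmod (G : ZMod n → M) : ∑ t : ZMod n, G t = ∑ j ∈ Finset.range n, G (j : ZMod n) := by
  refine Finset.sum_nbij' (i := fun t => t.val) (j := fun j => (j : ZMod n)) ?_ ?_ ?_ ?_ ?_
  · intro t _; exact Finset.mem_range.2 (ZMod.val_lt t)
  · intro j _; exact Finset.mem_univ _
  · intro t _; exact ZMod.natCast_rightInverse t
  · intro j hj; exact ZMod.val_cast_of_lt (Finset.mem_range.1 hj)
  · intro t _; rw [ZMod.natCast_rightInverse t]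

lemma reach (P : ZMod n → Prop) (hcl : ∀ t, P t → P (t + 1)) {t0 : ZMod n} (h : P t0) :
    ∀ t, P t := by
  have key : ∀ j : ℕ, P (t0 + j) := by
    intro j; induction j with
    | zero => simpa using h
    | succ m ih =>
        have := hcl _ ih
        have e : (((m + 1 : ℕ)) : ZMod n) = (m : ZMod n) + 1 := by push_cast; ring
        rw [e, ← add_assoc]; exact this
  intro t
  have := key ((t - t0).val)
  rwa [ZMod.natCast_rightInverse, add_sub_cancel] at this

lemma exists_exit (P : ZMod n → Prop) (h1 : ∃ t, P t) (h2 : ∃ t, ¬ P t) :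
    ∃ t, P t ∧ ¬ P (t + 1) := by
  by_contra hc
  push_neg at hc
  obtain ⟨t0, h⟩ := h1
  obtain ⟨t1, h1'⟩ := h2
  exact h1' (reach P (fun t ht => hc t ht) h t1)

lemma revFun_involutive (s : ℕ) (hs : s < n) : Function.Involutive (revFun n s) := by
  intro u
  unfold revFun
  by_cases h : u.val ≤ s
  · have hv : ((s - u.val : ℕ) : ZMod n).val = s - u.val :=
      ZMod.val_cast_of_lt (by omega)
    rw [if_pos h, hv]
    rw [if_pos (by omega)]
    have : s - (s - u.val) = u.val := by omega
    rw [this, ZMod.natCast_rightInverse]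
  · rw [if_neg h, if_neg h]

def revPerm (s : ℕ) (hs : s < n) : Equiv.Perm (ZMod n) :=
  (revFun_involutive s hs).toPerm

lemma revFun_apply_le (s j : ℕ) (hj : j ≤ s) (hs : s < n) :
    revFun n s (j : ZMod n) = ((s - j : ℕ) : ZMod n) := by
  unfold revFun
  rw [ZMod.val_cast_of_lt (by omega)]
  rw [if_pos hj]

lemma revFun_apply_gt (s j : ℕ) (hj : s < j) (hjn : j < n) :
    revFun n s (j : ZMod n) = (j : ZMod n) := by
  unfold revFun
  rw [ZMod.val_cast_of_lt hjn, if_neg (by omega)]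

lemma edge_sum_eq (h : ZMod n → ZMod n) (F : ZMod n → ZMod n → M) :
    ∑ t : ZMod n, F (h t) (h (t + 1)) =
      ∑ j ∈ Finset.range n, F (h (j : ZMod n)) (h ((j + 1 : ℕ) : ZMod n)) := by
  rw [sum_zmod (fun t => F (h t) (h (t + 1)))]
  refine Finset.sum_congr rfl fun j _ => ?_
  congr 1
  push_cast
  ring_nf

lemma rev_sum (F : ZMod n → ZMod n → M) (hF : ∀ x y, F x y = F y x)
    (g : ZMod n → ZMod n) (s : ℕ) (hs1 : 1 ≤ s) (hs2 : s + 2 ≤ n) :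
    (∑ t : ZMod n, F (g (revFun n s t)) (g (revFun n s (t + 1))))
      + F (g ((s : ℕ) : ZMod n)) (g ((s + 1 : ℕ) : ZMod n))
      + F (g ((n - 1 : ℕ) : ZMod n)) (g 0)
    = (∑ t : ZMod n, F (g t) (g (t + 1)))
      + F (g 0) (g ((s + 1 : ℕ) : ZMod n))
      + F (g ((n - 1 : ℕ) : ZMod n)) (g ((s : ℕ) : ZMod n)) := by
  have hn : 0 < n := by omega
  have hsn : s < n := by omega
  have decomp : ∀ (h : ZMod n → ZMod n),
      ∑ t : ZMod n, F (h t) (h (t + 1)) =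
        ((∑ j ∈ Finset.range s, F (h (j : ZMod n)) (h ((j + 1 : ℕ) : ZMod n)))
          + F (h ((s : ℕ) : ZMod n)) (h ((s + 1 : ℕ) : ZMod n)))
        + ((∑ j ∈ Finset.Ico (s+1) (n-1), F (h (j : ZMod n)) (h ((j + 1 : ℕ) : ZMod n)))
          + F (h ((n - 1 : ℕ) : ZMod n)) (h ((n : ℕ) : ZMod n))) := by
    intro h
    rw [edge_sum_eq h F]
    have e1 : Finset.range n = Finset.Ico 0 n := by rw [Finset.range_eq_Ico]
    rw [e1, ← Finset.sum_Ico_consecutive _ (Nat.zero_le (s+1)) (by omega : s + 1 ≤ n)]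
    congr 1
    · rw [← Finset.range_eq_Ico, Finset.sum_range_succ]
    · have e2 : Finset.Ico (s+1) n = Finset.Ico (s+1) ((n-1)+1) := by congr 1; omega
      rw [e2, Finset.sum_Ico_succ_top (by omega),
        show ((n - 1 + 1 : ℕ) : ZMod n) = ((n : ℕ) : ZMod n) by rw [show n - 1 + 1 = n by omega]]
  rw [decomp g, decomp (fun t => g (revFun n s t))]
  have hA : (∑ j ∈ Finset.range s,
        F (g (revFun n s (j : ZMod n))) (g (revFun n s ((j + 1 : ℕ) : ZMod n))))
      = ∑ j ∈ Finset.range s, F (g (j : ZMod n)) (g ((j + 1 : ℕ) : ZMod n)) := by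
    have lhs_eq : (∑ j ∈ Finset.range s,
        F (g (revFun n s (j : ZMod n))) (g (revFun n s ((j + 1 : ℕ) : ZMod n))))
        = ∑ j ∈ Finset.range s, F (g ((s - 1 - j + 1 : ℕ) : ZMod n)) (g ((s - 1 - j : ℕ) : ZMod n)) := by
      refine Finset.sum_congr rfl fun j hj => ?_
      have hjs : j < s := Finset.mem_range.1 hj
      rw [revFun_apply_le s j (by omega) hsn, revFun_apply_le s (j+1) (by omega) hsn,
        show s - j = s - 1 - j + 1 by omega, show s - (j+1) = s - 1 - j by omega]
    rw [lhs_eq, Finset.sum_range_reflect (fun i => F (g ((i + 1 : ℕ) : ZMod n)) (g ((i : ℕ) : ZMod n))) s]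
    refine Finset.sum_congr rfl fun j _ => hF _ _
  have hB : F (g (revFun n s ((s : ℕ) : ZMod n))) (g (revFun n s ((s + 1 : ℕ) : ZMod n)))
      = F (g 0) (g ((s + 1 : ℕ) : ZMod n)) := by
    rw [revFun_apply_le s s le_rfl hsn, revFun_apply_gt s (s+1) (by omega) (by omega)]
    congr 2
    simp [Nat.sub_self]
  have hC : (∑ j ∈ Finset.Ico (s+1) (n-1),
        F (g (revFun n s (j : ZMod n))) (g (revFun n s ((j + 1 : ℕ) : ZMod n))))
      = ∑ j ∈ Finset.Ico (s+1) (n-1), F (g (j : ZMod n)) (g ((j + 1 : ℕ) : ZMod n)) := by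
    refine Finset.sum_congr rfl fun j hj => ?_
    obtain ⟨hj1, hj2⟩ := Finset.mem_Ico.1 hj
    rw [revFun_apply_gt s j (by omega) (by omega), revFun_apply_gt s (j+1) (by omega) (by omega)]
  have hD : F (g (revFun n s ((n - 1 : ℕ) : ZMod n))) (g (revFun n s ((n : ℕ) : ZMod n)))
      = F (g ((n - 1 : ℕ) : ZMod n)) (g ((s : ℕ) : ZMod n)) := by
    have h0 : ((n : ℕ) : ZMod n) = ((0 : ℕ) : ZMod n) := by simp
    rw [h0, revFun_apply_gt s (n-1) (by omega) (by omega), revFun_apply_le s 0 (by omega) hsn]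
    simp
  rw [hA, hB, hC, hD]
  have h0 : ((n : ℕ) : ZMod n) = 0 := by simp
  rw [h0]
  abel

lemma wgt_symm (x y : ZMod n) : wgt n x y = wgt n y x := by
  unfold wgt
  by_cases h : y - x = 0
  · have h' : x - y = 0 := by rw [sub_eq_zero.mp h, sub_self]
    rw [h, h']
  · have hxy : x - y = -(y - x) := by ring
    rw [hxy, ZMod.neg_val, if_neg h]
    have hv : (y - x).val ≤ n := le_of_lt (ZMod.val_lt _)
    have : n - (n - (y - x).val) = (y - x).val := by omega
    rw [this]
    ring

lemma keyA (px d py n : ℕ) (h1 : 1 ≤ px) (h2 : px < d) (h3 : d ≤ py) (h4 : py + 1 ≤ n) :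
    (py - d) * (n - (py - d)) + px * (n - px) < (py - px) * (n - (py - px)) + d * (n - d) := by
  obtain ⟨β, hβ1, hβ⟩ : ∃ β, 1 ≤ β ∧ d = px + β := ⟨d - px, by omega, by omega⟩
  obtain ⟨γ, hγ⟩ : ∃ γ, py = d + γ := ⟨py - d, by omega⟩
  obtain ⟨δ, hδ1, hδ⟩ : ∃ δ, 1 ≤ δ ∧ n = py + δ := ⟨n - py, by omega, by omega⟩
  have e1 : py - d = γ := by omega
  have e2 : n - γ = px + β + δ := by omega
  have e3 : n - px = β + γ + δ := by omega
  have e4 : py - px = β + γ := by omega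
  have e5 : n - (β + γ) = px + δ := by omega
  have e6 : n - d = γ + δ := by omega
  rw [e1, e2, e3, e4, e5, e6, hβ]
  have key : (β + γ) * (px + δ) + (px + β) * (γ + δ)
      = γ * (px + β + δ) + px * (β + γ + δ) + 2 * (β * δ) := by ring
  rw [key]
  have : 0 < 2 * (β * δ) := by positivity
  omega

lemma keyB (d q r n : ℕ) (h1 : 1 ≤ d) (h2 : d < q) (h3 : q + 1 ≤ n) (h4 : 1 ≤ r) (h5 : r ≤ d) :
    ((n - d + r) % n) * (n - (n - d + r) % n) + q * (n - q)
      < (n - q + r) * (n - (n - q + r)) + d * (n - d) := by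
  obtain ⟨α, hα1, hα⟩ : ∃ α, 1 ≤ α ∧ q = d + α := ⟨q - d, by omega, by omega⟩
  obtain ⟨β, hβ1, hβ⟩ : ∃ β, 1 ≤ β ∧ n = q + β := ⟨n - q, by omega, by omega⟩
  obtain ⟨δ, hδ⟩ : ∃ δ, d = r + δ := ⟨d - r, by omega⟩
  have em : ((n - d + r) % n) * (n - (n - d + r) % n) = (α + β + r) * δ := by
    rcases Nat.eq_zero_or_pos δ with h0 | h0
    · have : n - d + r = n := by omega
      rw [this, Nat.mod_self, h0]
      simp
    · have hlt : n - d + r < n := by omega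
      rw [Nat.mod_eq_of_lt hlt, show n - d + r = α + β + r by omega,
        show n - (α + β + r) = δ by omega]
  rw [em, show n - q = β by omega, show n - (β + r) = α + δ by omega,
    show n - d = α + β by omega]
  have key : (β + r) * (α + δ) + d * (α + β)
      = (α + β + r) * δ + q * β + 2 * (α * r) := by rw [hα, hδ]; ring
  rw [key]
  have : 0 < 2 * (α * r) := by positivity
  omega

lemma cyclicOrdered_of_offsets (a : ZMod n) (p q r : ℕ)
    (hpq : p ≤ q) (hqr : q ≤ r) (hrn : r ≤ n) :
    CyclicOrdered a (a + (p : ZMod n)) (a + (q : ZMod n)) (a + (r : ZMod n)) := by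
  refine ⟨a.val, a.val + p, a.val + q, a.val + r, by omega, by omega, by omega, by omega,
    ?_, ?_, ?_, ?_⟩ <;>
  push_cast [ZMod.natCast_val, ZMod.cast_id] <;> ring

lemma natCast_pred_eq_neg_one (hn : 1 ≤ n) : ((n - 1 : ℕ) : ZMod n) = -1 := by
  have h : ((n - 1 : ℕ) : ZMod n) + 1 = 0 := by
    have : ((n - 1 : ℕ) : ZMod n) + ((1 : ℕ) : ZMod n) = ((n : ℕ) : ZMod n) := by
      rw [← Nat.cast_add, Nat.sub_add_cancel hn]
    simpa using this
  linear_combination h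

lemma swap_step (c : ZMod n → ZMod n → ℝ) (hsym : ∀ x y, c x y = c y x)
    (g : Equiv.Perm (ZMod n)) (s : ZMod n) (hs0 : s ≠ 0) (hsm1 : s ≠ -1)
    (hc : c (g 0) (g (s + 1)) + c (g (-1)) (g s) ≤ c (g s) (g (s + 1)) + c (g (-1)) (g 0))
    (hw : wgt n (g 0) (g (s + 1)) + wgt n (g (-1)) (g s)
        < wgt n (g s) (g (s + 1)) + wgt n (g (-1)) (g 0)) :
    ∃ f' : Equiv.Perm (ZMod n),
      (∑ t : ZMod n, c (f' t) (f' (t + 1))) ≤ (∑ t : ZMod n, c (g t) (g (t + 1))) ∧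
      (∑ t : ZMod n, wgt n (f' t) (f' (t + 1))) < (∑ t : ZMod n, wgt n (g t) (g (t + 1))) := by
  have hv1 : 1 ≤ s.val := by
    rcases Nat.eq_zero_or_pos s.val with h | h
    · exact absurd ((ZMod.val_eq_zero s).mp h) hs0
    · exact h
  have hvlt : s.val < n := ZMod.val_lt s
  have hv2 : s.val + 2 ≤ n := by
    rcases Nat.lt_or_ge (s.val) (n - 1) with h | h
    · omega
    · exfalso
      apply hsm1
      have hval : s.val = n - 1 := by omega
      calc s = ((s.val : ℕ) : ZMod n) := (ZMod.natCast_rightInverse s).symm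
        _ = ((n - 1 : ℕ) : ZMod n) := by rw [hval]
        _ = -1 := natCast_pred_eq_neg_one (by omega)
  have hcast_s : ((s.val : ℕ) : ZMod n) = s := ZMod.natCast_rightInverse s
  have hcast_s1 : ((s.val + 1 : ℕ) : ZMod n) = s + 1 := by
    push_cast [hcast_s]
    ring
  have hcast_n1 : ((n - 1 : ℕ) : ZMod n) = -1 := natCast_pred_eq_neg_one (by omega)
  refine ⟨(revPerm s.val hvlt).trans g, ?_, ?_⟩
  · have H := rev_sum (F := c) hsym (⇑g) s.val hv1 hv2
    rw [hcast_s, hcast_s1, hcast_n1] at H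
    have hsum : (∑ t : ZMod n, c (((revPerm s.val hvlt).trans g) t) (((revPerm s.val hvlt).trans g) (t + 1)))
        = ∑ t : ZMod n, c (g (revFun n s.val t)) (g (revFun n s.val (t + 1))) := rfl
    rw [hsum]
    linarith [H]
  · have H := rev_sum (F := wgt n) (wgt_symm) (⇑g) s.val hv1 hv2
    rw [hcast_s, hcast_s1, hcast_n1] at H
    have hsum : (∑ t : ZMod n, wgt n (((revPerm s.val hvlt).trans g) t) (((revPerm s.val hvlt).trans g) (t + 1)))
        = ∑ t : ZMod n, wgt n (g (revFun n s.val t)) (g (revFun n s.val (t + 1))) := rfl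
    rw [hsum]
    omega

lemma shift_sum (F : ZMod n → ZMod n → M) (f : ZMod n → ZMod n) (m : ZMod n) :
    ∑ t : ZMod n, F (f (t + m)) (f (t + m + 1)) = ∑ t : ZMod n, F (f t) (f (t + 1)) :=
  Fintype.sum_equiv (Equiv.addRight m) _ _ (fun t => rfl)

lemma val_one' (hn : 2 ≤ n) : (1 : ZMod n).val = 1 := by
  have := ZMod.val_cast_of_lt (show 1 < n by omega)
  simpa using this

lemma step (c : ZMod n → ZMod n → ℝ) (hsym : ∀ x y, c x y = c y x)
    (hssa : ∀ a b c' d : ZMod n, CyclicOrdered a b c' d → c b c' + c a d ≤ c b d + c a c')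
    (f : Equiv.Perm (ZMod n)) (t0 : ZMod n)
    (h1 : f (t0 + 1) ≠ f t0 + 1) (h2 : f (t0 + 1) ≠ f t0 - 1) :
    ∃ f' : Equiv.Perm (ZMod n),
      (∑ t : ZMod n, c (f' t) (f' (t + 1))) ≤ (∑ t : ZMod n, c (f t) (f (t + 1))) ∧
      (∑ t : ZMod n, wgt n (f' t) (f' (t + 1))) < (∑ t : ZMod n, wgt n (f t) (f (t + 1))) := by
  have hn1 : n ≠ 1 := by
    intro h
    subst h
    exact h1 (Subsingleton.elim _ _)
  have hn2 : 2 ≤ n := by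
    have := Nat.pos_of_ne_zero (NeZero.ne n)
    omega
  set a := f t0 with ha_def
  set b := f (t0 + 1) with hb_def
  have hab : b ≠ a := by
    intro h
    have h10 : (1 : ZMod n) = 0 := by
      have := f.injective h
      linear_combination this
    have := val_one' hn2
    rw [h10] at this
    simp at this
  set d := (b - a).val with hd_def
  have cast_diff : ∀ (u v : ZMod n), (((u - v).val : ℕ) : ZMod n) = u - v :=
    fun u v => ZMod.natCast_rightInverse _
  have hcd : ((d : ℕ) : ZMod n) = b - a := by rw [hd_def]; exact cast_diff b a
  have hd0 : d ≠ 0 := by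
    intro h
    exact hab (by
      have := (ZMod.val_eq_zero (b - a)).mp h
      have : b = a := by linear_combination this
      exact this)
  have hd1 : d ≠ 1 := by
    intro h
    apply h1
    have hba : b - a = 1 := by
      rw [← hcd, h]
      simp
    linear_combination hba
  have hdlt : d < n := ZMod.val_lt _
  have hdn1 : d ≠ n - 1 := by
    intro h
    apply h2
    have hba : b - a = -1 := by
      rw [← hcd, h, natCast_pred_eq_neg_one (by omega)]
    linear_combination hba
  have hd2 : 2 ≤ d := by omega
  have hdn2 : d ≤ n - 2 := by omega
  have hn4 : 4 ≤ n := by omega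
  set g : Equiv.Perm (ZMod n) := (Equiv.addRight (t0 + 1)).trans f with hg_def
  have hg : ∀ u, g u = f (u + (t0 + 1)) := fun u => rfl
  have hg0 : g 0 = b := by rw [hg]; congr 1; ring
  have hgm1 : g (-1) = a := by rw [hg]; congr 1; ring
  have hgm2 : g (-2) = f (t0 - 1) := by rw [hg]; congr 1; ring
  have hshc : (∑ t : ZMod n, c (g t) (g (t + 1))) = ∑ t : ZMod n, c (f t) (f (t + 1)) := by
    rw [← shift_sum (F := c) (⇑f) (t0 + 1)]
    refine Finset.sum_congr rfl fun t _ => by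
      rw [hg, hg, show t + 1 + (t0 + 1) = t + (t0 + 1) + 1 by ring]
  have hshw : (∑ t : ZMod n, wgt n (g t) (g (t + 1))) = ∑ t : ZMod n, wgt n (f t) (f (t + 1)) := by
    rw [← shift_sum (F := wgt n) (⇑f) (t0 + 1)]
    refine Finset.sum_congr rfl fun t _ => by
      rw [hg, hg, show t + 1 + (t0 + 1) = t + (t0 + 1) + 1 by ring]
  by_cases hP2 : 0 < (f (t0 - 1) - a).val ∧ (f (t0 - 1) - a).val < d
  case neg =>
    -- Case A : work with the inside of the arc from a to b
    obtain ⟨s, hsP, hsnP⟩ := exists_exit (fun t => 0 < (g t - a).val ∧ (g t - a).val < d)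
      ⟨g.symm (a + 1), by
        beta_reduce
        rw [Equiv.apply_symm_apply]
        have : a + 1 - a = 1 := by ring
        rw [this, val_one' hn2]
        exact ⟨by omega, by omega⟩⟩
      ⟨0, by
        beta_reduce
        rw [hg0]
        rw [← hd_def]
        exact fun h => absurd h.2 (lt_irrefl d)⟩
    beta_reduce at hsP hsnP
    set x := g s with hx_def
    set y := g (s + 1) with hy_def
    set px := (x - a).val with hpx_def
    set py := (y - a).val with hpy_def
    have hpx1 : 0 < px := hsP.1
    have hpx2 : px < d := hsP.2
    have hyne : y ≠ a := by
      intro h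
      have hs1 : s + 1 = -1 := g.injective (by rw [hgm1, ← hy_def]; exact h)
      have hs2 : s = -2 := by linear_combination hs1
      apply hP2
      have : g s = f (t0 - 1) := by rw [hs2, hgm2]
      rw [← hx_def] at this
      rw [← this]
      exact hsP
    have hpy0 : py ≠ 0 := by
      intro h
      exact hyne (by
        have := (ZMod.val_eq_zero (y - a)).mp h
        linear_combination this)
    have hpy1 : d ≤ py := by
      rcases Nat.lt_or_ge py d with h | h
      · exact absurd ⟨by omega, h⟩ hsnP
      · exact h
    have hpy2 : py < n := ZMod.val_lt _
    have hs0 : s ≠ 0 := by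
      intro h
      rw [h] at hx_def
      have : px = d := by rw [hpx_def, hx_def, hg0]
      omega
    have hsm1 : s ≠ -1 := by
      intro h
      rw [h] at hx_def
      have : px = 0 := by
        rw [hpx_def, hx_def, hgm1]
        simp
      omega
    -- the four points in cyclic position: a ≤ x ≤ b ≤ y
    have hcpx : ((px : ℕ) : ZMod n) = x - a := by rw [hpx_def]; exact cast_diff x a
    have hcpy : ((py : ℕ) : ZMod n) = y - a := by rw [hpy_def]; exact cast_diff y a
    have hb : x + ((d - px : ℕ) : ZMod n) = b := by
      rw [Nat.cast_sub (by omega), hcd, hcpx]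
      ring
    have hy : x + ((py - px : ℕ) : ZMod n) = y := by
      rw [Nat.cast_sub (by omega), hcpy, hcpx]
      ring
    have ha : x + ((n - px : ℕ) : ZMod n) = a := by
      rw [Nat.cast_sub (by omega), ZMod.natCast_self, hcpx]
      ring
    have hco : CyclicOrdered x b y a := by
      have := cyclicOrdered_of_offsets x (d - px) (py - px) (n - px)
        (by omega) (by omega) (by omega)
      rwa [hb, hy, ha] at this
    have hSSA := hssa x b y a hco
    have hcineq : c (g 0) (g (s + 1)) + c (g (-1)) (g s)
        ≤ c (g s) (g (s + 1)) + c (g (-1)) (g 0) := by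
      rw [hg0, hgm1, ← hx_def, ← hy_def]
      have e1 := hsym x a
      have e2 := hsym b a
      have e3 := hsym x y
      linarith
    have hwineq : wgt n (g 0) (g (s + 1)) + wgt n (g (-1)) (g s)
        < wgt n (g s) (g (s + 1)) + wgt n (g (-1)) (g 0) := by
      rw [hg0, hgm1, ← hx_def, ← hy_def]
      have w1 : wgt n a x = px * (n - px) := rfl
      have w2 : wgt n a b = d * (n - d) := rfl
      have w3 : wgt n x y = (py - px) * (n - (py - px)) := by
        unfold wgt
        rw [show y - x = ((py - px : ℕ) : ZMod n) by rw [← hy]; ring,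
          ZMod.val_cast_of_lt (by omega)]
      have w4 : wgt n b y = (py - d) * (n - (py - d)) := by
        unfold wgt
        rw [show y - b = ((py - d : ℕ) : ZMod n) by
          rw [Nat.cast_sub (by omega), hcpy, hcd]; ring,
          ZMod.val_cast_of_lt (by omega)]
      rw [w1, w2, w3, w4]
      exact keyA px d py n (by omega) (by omega) (by omega) (by omega)
    obtain ⟨f', hf1, hf2⟩ := swap_step c hsym g s hs0 hsm1 hcineq hwineq
    exact ⟨f', by rwa [hshc] at hf1, by rwa [hshw] at hf2⟩
  case pos =>
    -- Case B : work with the outside of the arc from a to b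
    obtain ⟨s, hsP, hsnP⟩ := exists_exit (fun t => d < (g t - a).val)
      ⟨g.symm (a + ((d + 1 : ℕ) : ZMod n)), by
        beta_reduce
        rw [Equiv.apply_symm_apply]
        have : a + ((d + 1 : ℕ) : ZMod n) - a = ((d + 1 : ℕ) : ZMod n) := by ring
        rw [this, ZMod.val_cast_of_lt (by omega)]
        omega⟩
      ⟨0, by
        beta_reduce
        rw [hg0, ← hd_def]
        exact lt_irrefl d⟩
    beta_reduce at hsP hsnP
    set x := g s with hx_def
    set y := g (s + 1) with hy_def
    set q := (x - a).val with hq_def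
    set r := (y - a).val with hr_def
    have hq1 : d < q := hsP
    have hq2 : q < n := ZMod.val_lt _
    have hyne : y ≠ a := by
      intro h
      have hs1 : s + 1 = -1 := g.injective (by rw [hgm1, ← hy_def]; exact h)
      have hs2 : s = -2 := by linear_combination hs1
      have : g s = f (t0 - 1) := by rw [hs2, hgm2]
      rw [← hx_def] at this
      have : d < (f (t0 - 1) - a).val := by rw [← this]; exact hsP
      omega
    have hr0 : r ≠ 0 := by
      intro h
      exact hyne (by
        have := (ZMod.val_eq_zero (y - a)).mp h
        linear_combination this)
    have hr1 : r ≤ d := by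
      rcases Nat.lt_or_ge d r with h | h
      · exact absurd h hsnP
      · exact h
    have hs0 : s ≠ 0 := by
      intro h
      rw [h] at hx_def
      have : q = d := by rw [hq_def, hx_def, hg0]
      omega
    have hsm1 : s ≠ -1 := by
      intro h
      rw [h] at hx_def
      have : q = 0 := by
        rw [hq_def, hx_def, hgm1]
        simp
      omega
    -- the four points in cyclic position: b ≤ x ≤ a ≤ y
    have hcq : ((q : ℕ) : ZMod n) = x - a := by rw [hq_def]; exact cast_diff x a
    have hcr : ((r : ℕ) : ZMod n) = y - a := by rw [hr_def]; exact cast_diff y a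
    have hx : b + ((q - d : ℕ) : ZMod n) = x := by
      rw [Nat.cast_sub (by omega), hcq, hcd]
      ring
    have ha : b + ((n - d : ℕ) : ZMod n) = a := by
      rw [Nat.cast_sub (by omega), ZMod.natCast_self, hcd]
      ring
    have hy : b + ((n - d + r : ℕ) : ZMod n) = y := by
      rw [Nat.cast_add, Nat.cast_sub (by omega), ZMod.natCast_self, hcr, hcd]
      ring
    have hco : CyclicOrdered b x a y := by
      have := cyclicOrdered_of_offsets b (q - d) (n - d) (n - d + r)
        (by omega) (by omega) (by omega)
      rwa [hx, ha, hy] at this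
    have hSSA := hssa b x a y hco
    have hcineq : c (g 0) (g (s + 1)) + c (g (-1)) (g s)
        ≤ c (g s) (g (s + 1)) + c (g (-1)) (g 0) := by
      rw [hg0, hgm1, ← hx_def, ← hy_def]
      have e1 := hsym x a
      have e2 := hsym b a
      linarith
    have hwineq : wgt n (g 0) (g (s + 1)) + wgt n (g (-1)) (g s)
        < wgt n (g s) (g (s + 1)) + wgt n (g (-1)) (g 0) := by
      rw [hg0, hgm1, ← hx_def, ← hy_def]
      have w1 : wgt n a x = q * (n - q) := rfl
      have w2 : wgt n a b = d * (n - d) := rfl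
      have w3 : wgt n x y = (n - q + r) * (n - (n - q + r)) := by
        unfold wgt
        rw [show y - x = ((n - q + r : ℕ) : ZMod n) by
          rw [Nat.cast_add, Nat.cast_sub (by omega), ZMod.natCast_self, hcr, hcq]
          ring, ZMod.val_cast_of_lt (by omega)]
      have w4 : wgt n b y = ((n - d + r) % n) * (n - (n - d + r) % n) := by
        unfold wgt
        rw [show y - b = ((n - d + r : ℕ) : ZMod n) by rw [← hy]; ring,
          ZMod.val_natCast]
      rw [w1, w2, w3, w4]
      exact keyB d q r n (by omega) (by omega) (by omega) (by omega) (by omega)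
    obtain ⟨f', hf1, hf2⟩ := swap_step c hsym g s hs0 hsm1 hcineq hwineq
    exact ⟨f', by rwa [hshc] at hf1, by rwa [hshw] at hf2⟩

lemma all_short (c : ZMod n → ZMod n → ℝ) (hsym : ∀ x y, c x y = c y x)
    (f : Equiv.Perm (ZMod n))
    (h : ∀ t : ZMod n, f (t + 1) = f t + 1 ∨ f (t + 1) = f t - 1) :
    (∑ t : ZMod n, c (f t) (f (t + 1))) = ∑ t : ZMod n, c t (t + 1) := by
  by_cases hplus : ∃ t : ZMod n, f (t + 1) = f t + 1
  · -- all steps are +1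
    obtain ⟨t0, ht0⟩ := hplus
    have hall : ∀ t : ZMod n, f (t + 1) = f t + 1 := by
      refine reach (fun t => f (t + 1) = f t + 1) ?_ ht0
      intro t ht
      rcases h (t + 1) with h' | h'
      · exact h'
      · -- f (t+2) = f (t+1) - 1 = f t, so t + 2 = t, so 2 = 0 in ZMod n, so -1 = 1
        have h2 : f (t + 1 + 1) = f t := by rw [h', ht]; ring
        have ht2 : t + 1 + 1 = t := f.injective h2
        have h20 : (1 : ZMod n) = -1 := by linear_combination ht2
        rw [h']
        linear_combination -h20
    have hlin : ∀ j : ℕ, f ((j : ZMod n)) = f 0 + j := by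
      intro j
      induction j with
      | zero => simp
      | succ m ih =>
          have : ((m + 1 : ℕ) : ZMod n) = (m : ZMod n) + 1 := by push_cast; ring
          rw [this, hall, ih]
          push_cast
          ring
    have hf : ∀ t : ZMod n, f t = f 0 + t := by
      intro t
      have := hlin t.val
      rwa [ZMod.natCast_rightInverse t] at this
    calc (∑ t : ZMod n, c (f t) (f (t + 1)))
        = ∑ t : ZMod n, c (f 0 + t) (f 0 + t + 1) := by
          refine Finset.sum_congr rfl fun t _ => by rw [hf t, hf (t + 1)]; ring_nf
      _ = ∑ t : ZMod n, c t (t + 1) :=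
          Fintype.sum_equiv (Equiv.addLeft (f 0)) _ _ (fun t => rfl)
  · -- all steps are -1
    push_neg at hplus
    have hall : ∀ t : ZMod n, f (t + 1) = f t - 1 := by
      intro t
      rcases h t with h' | h'
      · exact absurd h' (hplus t)
      · exact h'
    have hlin : ∀ j : ℕ, f ((j : ZMod n)) = f 0 - j := by
      intro j
      induction j with
      | zero => simp
      | succ m ih =>
          have : ((m + 1 : ℕ) : ZMod n) = (m : ZMod n) + 1 := by push_cast; ring
          rw [this, hall, ih]
          push_cast
          ring
    have hf : ∀ t : ZMod n, f t = f 0 - t := by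
      intro t
      have := hlin t.val
      rwa [ZMod.natCast_rightInverse t] at this
    calc (∑ t : ZMod n, c (f t) (f (t + 1)))
        = ∑ t : ZMod n, c ((f 0 - 1 - t) + 1) (f 0 - 1 - t) := by
          refine Finset.sum_congr rfl fun t _ => by rw [hf t, hf (t + 1)]; ring_nf
      _ = ∑ t : ZMod n, c (f 0 - 1 - t) ((f 0 - 1 - t) + 1) :=
          Finset.sum_congr rfl fun t _ => hsym _ _
      _ = ∑ t : ZMod n, c t (t + 1) :=
          Fintype.sum_equiv (Equiv.subLeft (f 0 - 1)) _ _ (fun t => rfl)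

theorem tour_bound (c : ZMod n → ZMod n → ℝ) (hsym : ∀ x y, c x y = c y x)
    (hssa : ∀ a b c' d : ZMod n, CyclicOrdered a b c' d → c b c' + c a d ≤ c b d + c a c')
    (f : Equiv.Perm (ZMod n)) :
    (∑ t : ZMod n, c t (t + 1)) ≤ ∑ t : ZMod n, c (f t) (f (t + 1)) := by
  have main : ∀ N : ℕ, ∀ f : Equiv.Perm (ZMod n),
      (∑ t : ZMod n, wgt n (f t) (f (t + 1))) < N →
      (∑ t : ZMod n, c t (t + 1)) ≤ ∑ t : ZMod n, c (f t) (f (t + 1)) := by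
    intro N
    induction N with
    | zero => intro f hf; omega
    | succ N ih =>
        intro f hf
        by_cases hlong : ∃ t0 : ZMod n, f (t0 + 1) ≠ f t0 + 1 ∧ f (t0 + 1) ≠ f t0 - 1
        · obtain ⟨t0, ht1, ht2⟩ := hlong
          obtain ⟨f', hf1, hf2⟩ := step c hsym hssa f t0 ht1 ht2
          have := ih f' (by omega)
          linarith
        · push_neg at hlong
          have h : ∀ t : ZMod n, f (t + 1) = f t + 1 ∨ f (t + 1) = f t - 1 := by
            intro t
            by_cases h1 : f (t + 1) = f t + 1
            · exact Or.inl h1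
            · exact Or.inr (hlong t h1)
          exact le_of_eq (all_short c hsym f h).symm
  exact main (∑ t : ZMod n, wgt n (f t) (f (t + 1)) + 1) f (by omega)

lemma sum_range_pair {M : Type*} [AddCommMonoid M] (G : ℕ → M) (k : ℕ) :
    ∑ j ∈ Finset.range (2*k), G j = ∑ j ∈ Finset.range k, (G (2*j) + G (2*j+1)) := by
  induction k with
  | zero => simp
  | succ m ih =>
      rw [show 2*(m+1) = 2*m+1+1 by ring, Finset.sum_range_succ, Finset.sum_range_succ, ih,
        Finset.sum_range_succ (fun j => G (2*j) + G (2*j+1)) m]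
      abel

def tourFun (k : ℕ) (σ : Equiv.Perm (ZMod k)) : ZMod (2*k) → ZMod (2*k) :=
  fun t => if t.val % 2 = 0 then Lpt (σ ((t.val / 2 : ℕ) : ZMod k))
           else Rpt (σ ((t.val / 2 : ℕ) : ZMod k))

section Final

variable {k : ℕ} [NeZero k] [NeZero (2*k)]

lemma val_Lpt (i : ZMod k) : (Lpt i).val = 2 * i.val := by
  unfold Lpt
  exact ZMod.val_cast_of_lt (by have := ZMod.val_lt i; omega)

lemma val_Rpt (i : ZMod k) : (Rpt i).val = 2 * i.val + 1 := by
  unfold Rpt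
  exact ZMod.val_cast_of_lt (by have := ZMod.val_lt i; omega)

lemma tourFun_val (σ : Equiv.Perm (ZMod k)) (t : ZMod (2*k)) :
    (tourFun k σ t).val = 2 * (σ ((t.val / 2 : ℕ) : ZMod k)).val + t.val % 2 := by
  unfold tourFun
  by_cases h : t.val % 2 = 0
  · rw [if_pos h, val_Lpt, h]
    omega
  · have h1 : t.val % 2 = 1 := by omega
    rw [if_neg h, val_Rpt, h1]

lemma tourFun_injective (σ : Equiv.Perm (ZMod k)) : Function.Injective (tourFun k σ) := by
  intro t1 t2 h
  have hv := congrArg ZMod.val h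
  rw [tourFun_val, tourFun_val] at hv
  have hb1 : t1.val % 2 < 2 := Nat.mod_lt _ (by omega)
  have hb2 : t2.val % 2 < 2 := Nat.mod_lt _ (by omega)
  have hσ : (σ ((t1.val / 2 : ℕ) : ZMod k)).val = (σ ((t2.val / 2 : ℕ) : ZMod k)).val := by omega
  have hm : t1.val % 2 = t2.val % 2 := by omega
  have hj : ((t1.val / 2 : ℕ) : ZMod k) = ((t2.val / 2 : ℕ) : ZMod k) :=
    σ.injective (ZMod.val_injective _ hσ)
  have hv1 : t1.val < 2 * k := ZMod.val_lt t1
  have hv2 : t2.val < 2 * k := ZMod.val_lt t2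
  have hj2 : t1.val / 2 = t2.val / 2 := by
    have := congrArg ZMod.val hj
    rwa [ZMod.val_cast_of_lt (by omega), ZMod.val_cast_of_lt (by omega)] at this
  exact ZMod.val_injective _ (by omega)

noncomputable def tourPerm (σ : Equiv.Perm (ZMod k)) : Equiv.Perm (ZMod (2*k)) :=
  Equiv.ofBijective _ (Finite.injective_iff_bijective.mp (tourFun_injective σ))

lemma tourPerm_apply (σ : Equiv.Perm (ZMod k)) (t : ZMod (2*k)) :
    tourPerm σ t = tourFun k σ t := rfl

lemma tour_edge_sum {M : Type*} [AddCommMonoid M] (F : ZMod (2*k) → ZMod (2*k) → M)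
    (σ : Equiv.Perm (ZMod k)) :
    ∑ t : ZMod (2*k), F (tourFun k σ t) (tourFun k σ (t + 1))
      = ∑ i : ZMod k, (F (Lpt (σ i)) (Rpt (σ i)) + F (Rpt (σ i)) (Lpt (σ (i + 1)))) := by
  have hk : 1 ≤ k := Nat.pos_of_ne_zero (NeZero.ne k)
  rw [edge_sum_eq (tourFun k σ) F,
    sum_range_pair (fun j => F (tourFun k σ (j : ZMod (2*k))) (tourFun k σ ((j+1 : ℕ) : ZMod (2*k)))) k,
    sum_zmod (fun i => F (Lpt (σ i)) (Rpt (σ i)) + F (Rpt (σ i)) (Lpt (σ (i + 1))))]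
  refine Finset.sum_congr rfl fun j hj => ?_
  have hjk : j < k := Finset.mem_range.1 hj
  have h1 : tourFun k σ ((2*j : ℕ) : ZMod (2*k)) = Lpt (σ ((j : ℕ) : ZMod k)) := by
    unfold tourFun
    rw [ZMod.val_cast_of_lt (by omega), if_pos (by omega), show 2*j/2 = j by omega]
  have h2 : tourFun k σ ((2*j+1 : ℕ) : ZMod (2*k)) = Rpt (σ ((j : ℕ) : ZMod k)) := by
    unfold tourFun
    rw [ZMod.val_cast_of_lt (by omega), if_neg (by omega)]
    rw [show (2*j+1)/2 = j by omega]
  have h3 : tourFun k σ ((2*j+1+1 : ℕ) : ZMod (2*k)) = Lpt (σ ((j : ZMod k) + 1)) := by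
    rcases Nat.lt_or_ge (j+1) k with hlt | hge
    · unfold tourFun
      rw [ZMod.val_cast_of_lt (by omega), if_pos (by omega), show (2*j+1+1)/2 = j+1 by omega]
      congr 2
      push_cast
      ring
    · have hjeq : j + 1 = k := by omega
      have hcast : ((2*j+1+1 : ℕ) : ZMod (2*k)) = ((0 : ℕ) : ZMod (2*k)) := by
        rw [show 2*j+1+1 = 2*k by omega]
        simp
      rw [hcast]
      unfold tourFun
      rw [show ((0:ℕ) : ZMod (2*k)).val = 0 by simp, if_pos (by omega)]
      congr 2
      rw [show (0:ℕ)/2 = 0 by omega]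
      have : ((j : ZMod k)) + 1 = ((j + 1 : ℕ) : ZMod k) := by push_cast; ring
      rw [this, hjeq]
      simp
  beta_reduce
  rw [h1, h2, h3]

lemma tourFun_one (t : ZMod (2*k)) : tourFun k 1 t = t := by
  unfold tourFun
  have hv : t.val < 2*k := ZMod.val_lt t
  by_cases h : t.val % 2 = 0
  · rw [if_pos h]
    simp only [Equiv.Perm.coe_one, id_eq]
    unfold Lpt
    rw [ZMod.val_cast_of_lt (show t.val/2 < k by omega), show 2*(t.val/2) = t.val by omega,
      ZMod.natCast_rightInverse]
  · rw [if_neg h]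
    simp only [Equiv.Perm.coe_one, id_eq]
    unfold Rpt
    rw [ZMod.val_cast_of_lt (show t.val/2 < k by omega), show 2*(t.val/2)+1 = t.val by omega,
      ZMod.natCast_rightInverse]

end Final

end ConnPhase

theorem connected_phase_spatial_order_minimal {k : ℕ} [NeZero k]
    (S : ZMod (2 * k) → ZMod (2 * k) → ℝ)
    (hpure : ∀ a b, S a b = S b a)
    (hssa : ∀ a b c d : ZMod (2 * k), CyclicOrdered a b c d →
      S b c + S a d ≤ S b d + S a c)
    (σ : Equiv.Perm (ZMod k)) :
    ∑ i : ZMod k, S (Rpt i) (Lpt (i + 1)) ≤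
      ∑ i : ZMod k, S (Rpt (σ i)) (Lpt (σ (i + 1))) := by
  haveI : NeZero (2 * k) := ⟨by have := Nat.pos_of_ne_zero (NeZero.ne k); omega⟩
  have hb := ConnPhase.tour_bound S hpure hssa (ConnPhase.tourPerm σ)
  have hσsum : (∑ t : ZMod (2*k), S (ConnPhase.tourPerm σ t) (ConnPhase.tourPerm σ (t + 1)))
      = ∑ i : ZMod k, (S (Lpt (σ i)) (Rpt (σ i)) + S (Rpt (σ i)) (Lpt (σ (i + 1)))) :=
    ConnPhase.tour_edge_sum S σ
  have hidsum : (∑ t : ZMod (2*k), S t (t + 1))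
      = ∑ i : ZMod k, (S (Lpt i) (Rpt i) + S (Rpt i) (Lpt (i + 1))) := by
    have h1 := ConnPhase.tour_edge_sum (k := k) S 1
    have h2 : (∑ t : ZMod (2*k), S (ConnPhase.tourFun k 1 t) (ConnPhase.tourFun k 1 (t + 1)))
        = ∑ t : ZMod (2*k), S t (t + 1) :=
      Finset.sum_congr rfl fun t _ => by rw [ConnPhase.tourFun_one, ConnPhase.tourFun_one]
    rw [← h2, h1]
    simp
  have hre : (∑ i : ZMod k, S (Lpt (σ i)) (Rpt (σ i))) = ∑ i : ZMod k, S (Lpt i) (Rpt i) :=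
    Fintype.sum_equiv σ _ _ (fun i => rfl)
  rw [hσsum, hidsum, Finset.sum_add_distrib, Finset.sum_add_distrib] at hb
  linarith [hb, hre]
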